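/- Fix θ > 0 and let G(r) = γ(3/2, r²/(4θ)). The equation G(r) = r·G'(r) for r > 0 has exactly one positive solution. -/

import Mathlib

open Real

/-- The lower incomplete gamma function `γ(s, x) = ∫₀^x t^(s-1) e^(-t) dt`. -/
noncomputable def lowerGamma (s x : ℝ) : ℝ := ∫ t in (0:ℝ)..x, t ^ (s - 1) * Real.exp (-t)

namespace Stmt3Aux

noncomputable def f (t : ℝ) : ℝ := t ^ ((1:ℝ)/2) * Real.exp (-t)

lemma contF : Continuous f := by
  apply Continuous.mul
  · rw [continuous_iff_continuousAt]
    intro x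
    exact Real.continuousAt_rpow_const x _ (Or.inr (by norm_num))
  · exact Real.continuous_exp.comp continuous_neg

lemma lowerGamma_eq (x : ℝ) : lowerGamma (3/2) x = ∫ t in (0:ℝ)..x, f t := by
  unfold lowerGamma f; norm_num

noncomputable def F (x : ℝ) : ℝ :=
  (∫ t in (0:ℝ)..x, f t) - 2 * x ^ ((3:ℝ)/2) * Real.exp (-x)

lemma F_eq (x : ℝ) : F x = lowerGamma (3/2) x - 2 * x ^ ((3:ℝ)/2) * Real.exp (-x) := by
  rw [lowerGamma_eq]; rfl

lemma contRpow32 : Continuous (fun x : ℝ => x ^ ((3:ℝ)/2)) := by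
  rw [continuous_iff_continuousAt]
  intro x
  exact Real.continuousAt_rpow_const x _ (Or.inr (by norm_num))

lemma contFF : Continuous F := by
  apply Continuous.sub
  · rw [continuous_iff_continuousAt]
    intro x
    exact (contF.integral_hasStrictDerivAt 0 x).hasDerivAt.continuousAt
  · exact ((continuous_const.mul contRpow32).mul (Real.continuous_exp.comp continuous_neg))

lemma hasDerivF {x : ℝ} (hx : 0 < x) :
    HasDerivAt F (2 * x ^ ((1:ℝ)/2) * Real.exp (-x) * (x - 1)) x := by
  have h1 : HasDerivAt (fun u => ∫ t in (0:ℝ)..u, f t) (f x) x :=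
    (contF.integral_hasStrictDerivAt 0 x).hasDerivAt
  have h2 : HasDerivAt (fun u : ℝ => u ^ ((3:ℝ)/2)) ((3/2) * x ^ ((1:ℝ)/2)) x := by
    have := Real.hasDerivAt_rpow_const (x := x) (p := 3/2) (Or.inl hx.ne')
    convert this using 2
    norm_num
  have h3 : HasDerivAt (fun u : ℝ => Real.exp (-u)) (-Real.exp (-x)) x := by
    have h := (Real.hasDerivAt_exp (-x)).comp x (hasDerivAt_neg x)
    simp at h
    exact h
  have h4 := (h2.const_mul (2:ℝ)).mul h3
  have h5 := h1.sub h4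
  have hx32 : x ^ ((3:ℝ)/2) = x * x ^ ((1:ℝ)/2) := by
    rw [show (3:ℝ)/2 = 1 + 1/2 by norm_num, Real.rpow_add hx, Real.rpow_one]
  refine h5.congr_deriv ?_
  unfold f
  rw [hx32]
  ring

lemma derivF {x : ℝ} (hx : 0 < x) :
    deriv F x = 2 * x ^ ((1:ℝ)/2) * Real.exp (-x) * (x - 1) :=
  (hasDerivF hx).deriv

lemma Fanti : StrictAntiOn F (Set.Icc 0 1) := by
  apply strictAntiOn_of_deriv_neg (convex_Icc 0 1) contFF.continuousOn
  intro x hx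
  rw [interior_Icc] at hx
  have hx0 : 0 < x := hx.1
  rw [derivF hx0]
  have h1 : 0 < 2 * x ^ ((1:ℝ)/2) * Real.exp (-x) := by positivity
  have h2 : x - 1 < 0 := by linarith [hx.2]
  exact mul_neg_of_pos_of_neg h1 h2

lemma Fmono : StrictMonoOn F (Set.Ici 1) := by
  apply strictMonoOn_of_deriv_pos (convex_Ici 1) contFF.continuousOn
  intro x hx
  rw [interior_Ici] at hx
  have hx1 : (1:ℝ) < x := hx
  have hx0 : (0:ℝ) < x := lt_trans one_pos hx1
  rw [derivF hx0]
  have h1 : 0 < 2 * x ^ ((1:ℝ)/2) * Real.exp (-x) := by positivity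
  have h2 : 0 < x - 1 := by linarith
  exact mul_pos h1 h2

lemma F_zero : F 0 = 0 := by
  unfold F
  rw [intervalIntegral.integral_same, Real.zero_rpow (by norm_num : (3:ℝ)/2 ≠ 0)]
  ring

lemma F_one_neg : F 1 < 0 := by
  have := Fanti (Set.mem_Icc.2 ⟨le_refl 0, zero_le_one⟩)
    (Set.mem_Icc.2 ⟨zero_le_one, le_refl 1⟩) one_pos
  rwa [F_zero] at this

lemma exp8_gt : (81:ℝ) < Real.exp 8 := by
  have h2 : (2:ℝ) < Real.exp 1 := by
    have := Real.exp_one_gt_d9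
    linarith
  have hp : (2:ℝ)^(8:ℕ) < Real.exp 1 ^ (8:ℕ) :=
    pow_lt_pow_left₀ h2 (by norm_num) (by norm_num)
  have he : Real.exp 1 ^ (8:ℕ) = Real.exp 8 := by
    rw [← Real.exp_nat_mul]; norm_num
  calc (81:ℝ) < 2^(8:ℕ) := by norm_num
    _ < Real.exp 1 ^ (8:ℕ) := hp
    _ = Real.exp 8 := he

lemma F_nine_pos : 0 < F 9 := by
  have hint : ∀ a b : ℝ, IntervalIntegrable f MeasureTheory.volume a b :=
    fun a b => contF.intervalIntegrable a b
  have hsplit : (∫ t in (0:ℝ)..9, f t) = (∫ t in (0:ℝ)..1, f t) + ∫ t in (1:ℝ)..9, f t :=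
    (intervalIntegral.integral_add_adjacent_intervals (hint 0 1) (hint 1 9)).symm
  have h19 : (0:ℝ) ≤ ∫ t in (1:ℝ)..9, f t := by
    apply intervalIntegral.integral_nonneg (by norm_num)
    intro t ht
    exact mul_nonneg (Real.rpow_nonneg (le_trans zero_le_one ht.1) _) (Real.exp_pos _).le
  have h01 : Real.exp (-1) * (2/3) ≤ ∫ t in (0:ℝ)..1, f t := by
    have hle : (∫ t in (0:ℝ)..1, t ^ ((1:ℝ)/2) * Real.exp (-1)) ≤ ∫ t in (0:ℝ)..1, f t := by
      apply intervalIntegral.integral_mono_on (by norm_num) _ (hint 0 1)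
      · intro t ht
        unfold f
        apply mul_le_mul_of_nonneg_left _ (Real.rpow_nonneg ht.1 _)
        exact Real.exp_le_exp.2 (by linarith [ht.2])
      · apply Continuous.intervalIntegrable
        exact Continuous.mul (by
          rw [continuous_iff_continuousAt]
          intro x
          exact Real.continuousAt_rpow_const x _ (Or.inr (by norm_num))) continuous_const
    have heq : (∫ t in (0:ℝ)..1, t ^ ((1:ℝ)/2) * Real.exp (-1)) = Real.exp (-1) * (2/3) := by
      rw [intervalIntegral.integral_mul_const, integral_rpow (Or.inl (by norm_num))]
      rw [Real.one_rpow, Real.zero_rpow (by norm_num : (1:ℝ)/2 + 1 ≠ 0)]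
      ring
    linarith
  have h27 : (9:ℝ) ^ ((3:ℝ)/2) = 27 := by
    rw [show (9:ℝ) = 3^(2:ℕ) by norm_num, ← Real.rpow_natCast (3:ℝ) 2,
      ← Real.rpow_mul (by norm_num), show ((2:ℕ):ℝ)*(3/2) = ((3:ℕ):ℝ) by norm_num,
      Real.rpow_natCast]
    norm_num
  have hkey : 54 * Real.exp (-9) < (2/3) * Real.exp (-1) := by
    have hprod : Real.exp (-9) * Real.exp 8 = Real.exp (-1) := by
      rw [← Real.exp_add]; norm_num
    nlinarith [exp8_gt, Real.exp_pos (-9)]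
  unfold F
  rw [hsplit, h27]
  nlinarith [h01, h19, hkey]

lemma exists_unique_x : ∃! x : ℝ, 0 < x ∧ F x = 0 := by
  have hgt : ∀ y : ℝ, 0 < y → F y = 0 → 1 < y := by
    intro y hy hFy
    by_contra h
    push_neg at h
    have := Fanti (Set.mem_Icc.2 ⟨le_refl 0, zero_le_one⟩) (Set.mem_Icc.2 ⟨hy.le, h⟩) hy
    rw [F_zero, hFy] at this
    exact lt_irrefl 0 this
  obtain ⟨x₀, hx₀mem, hFx₀⟩ :=
    intermediate_value_Ioo (by norm_num : (1:ℝ) ≤ 9) contFF.continuousOn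
      (Set.mem_Ioo.2 ⟨F_one_neg, F_nine_pos⟩)
  refine ⟨x₀, ⟨lt_trans one_pos hx₀mem.1, hFx₀⟩, ?_⟩
  intro y ⟨hy, hFy⟩
  have hy1 : 1 < y := hgt y hy hFy
  exact Fmono.injOn (Set.mem_Ici.2 hy1.le) (Set.mem_Ici.2 hx₀mem.1.le) (by rw [hFy, hFx₀])

lemma rpow_identity {θ r : ℝ} (hθ : 0 < θ) (hr : 0 < r) :
    (r^2/(4*θ)) ^ ((3:ℝ)/2) = r^3 / (8 * θ^((3:ℝ)/2)) := by
  have h2 : ((r:ℝ)^2) ^ ((3:ℝ)/2) = r^3 := by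
    rw [← Real.rpow_natCast r 2, ← Real.rpow_mul hr.le,
      show ((2:ℕ):ℝ)*(3/2) = ((3:ℕ):ℝ) by norm_num, Real.rpow_natCast]
  have h3 : ((4:ℝ)*θ) ^ ((3:ℝ)/2) = 8 * θ^((3:ℝ)/2) := by
    rw [Real.mul_rpow (by norm_num) hθ.le]
    congr 1
    rw [show (4:ℝ) = 2^(2:ℕ) by norm_num, ← Real.rpow_natCast (2:ℝ) 2,
      ← Real.rpow_mul (by norm_num), show ((2:ℕ):ℝ)*(3/2) = ((3:ℕ):ℝ) by norm_num,
      Real.rpow_natCast]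
    norm_num
  rw [Real.div_rpow (sq_nonneg r) (by positivity), h2, h3]

end Stmt3Aux

open Stmt3Aux in
/-- The equation `G(r) = r G'(r)`, with `G'(r) = r² e^{-r²/(4θ)}/(4θ^{3/2})`, has exactly one
positive solution. -/
theorem stmt_3 (θ : ℝ) (hθ : 0 < θ) :
    ∃! r : ℝ, 0 < r ∧
      lowerGamma (3/2) (r ^ 2 / (4 * θ)) =
        r * (r ^ 2 * Real.exp (-r ^ 2 / (4 * θ)) / (4 * θ ^ ((3:ℝ)/2))) := by
  obtain ⟨x₀, ⟨hx₀pos, hFx₀⟩, hx₀uniq⟩ := exists_unique_x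
  have hθx₀ : 0 < θ * x₀ := mul_pos hθ hx₀pos
  set r₀ : ℝ := 2 * Real.sqrt (θ * x₀) with hr₀def
  have hr₀pos : 0 < r₀ := by positivity
  have hr₀sq : r₀^2 / (4*θ) = x₀ := by
    have h : r₀^2 = 4 * (θ * x₀) := by
      rw [hr₀def, mul_pow, Real.sq_sqrt hθx₀.le]; ring
    rw [h]
    field_simp
  have hθ32 : 0 < θ ^ ((3:ℝ)/2) := Real.rpow_pos_of_pos hθ _
  have key : ∀ r : ℝ, 0 < r →
      ((lowerGamma (3/2) (r ^ 2 / (4 * θ)) =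
        r * (r ^ 2 * Real.exp (-r ^ 2 / (4 * θ)) / (4 * θ ^ ((3:ℝ)/2)))) ↔
        F (r^2/(4*θ)) = 0) := by
    intro r hr
    have hrhs : r * (r ^ 2 * Real.exp (-r ^ 2 / (4 * θ)) / (4 * θ ^ ((3:ℝ)/2))) =
        2 * (r^2/(4*θ)) ^ ((3:ℝ)/2) * Real.exp (-(r^2/(4*θ))) := by
      rw [rpow_identity hθ hr, neg_div]
      field_simp
      ring
    rw [F_eq, sub_eq_zero, hrhs]
  refine ⟨r₀, ⟨hr₀pos, ?_⟩, ?_⟩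
  · rw [key r₀ hr₀pos, hr₀sq]
    exact hFx₀
  · intro r ⟨hr, heq⟩
    rw [key r hr] at heq
    have hx : r^2/(4*θ) = x₀ := hx₀uniq _ ⟨by positivity, heq⟩
    have hsq : r^2 = r₀^2 := by
      have h1 : r^2 = 4*θ*x₀ := by
        field_simp at hx
        linarith
      have h2 : r₀^2 = 4*θ*x₀ := by
        field_simp at hr₀sq
        linarith
      rw [h1, h2]
    have hfac : (r - r₀) * (r + r₀) = 0 := by linear_combination hsq
    rcases mul_eq_zero.1 hfac with h | h
    · linarith
    · linarith
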